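/- arXiv:2303.00735 — 6 statements merged into one kernel-verified Lean document; each statement's English description precedes it below -/
import Mathlib

section
/- Lipschitz quasi-convex functions are strictly-locally-quasi-convex (Lemma: SLQC): Let H be a real inner product space, X ⊆ H a convex set, f : H → ℝ a G-Lipschitz quasi-convex function with G > 0, ε > 0, and x, x* ∈ X with f(x) − f(x*) > ε. Then for every unit vector Δ ∈ H (‖Δ‖ = 1) belonging to the normal cone of the sublevel set {z : f(z) ≤ f(x)} at x (i.e., ⟪Δ, z − x⟫ ≤ 0 for all z with f(z) ≤ f(x)), and for every y ∈ H with ‖y − x*‖ ≤ ε/G, it holds that ⟪Δ, y − x⟫ ≤ 0. -/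
open scoped RealInnerProductSpace

/-- Lipschitz quasi-convex functions are strictly-locally-quasi-convex (SLQC): if `f` is
`G`-Lipschitz and quasi-convex, `x, xstar ∈ X` with `f x - f xstar > ε`, then every unit
vector `Δ` in the normal cone of the sublevel set `{z | f z ≤ f x}` at `x` satisfies
`⟪Δ, y - x⟫ ≤ 0` for every `y` in the closed ball of radius `ε/G` around `xstar`. -/
theorem lipschitz_quasiconvex_slqc
    {H : Type*} [NormedAddCommGroup H] [InnerProductSpace ℝ H]
    (X : Set H) (hXconv : Convex ℝ X)
    (f : H → ℝ) (G : ℝ) (hG : 0 < G)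
    (hlip : ∀ a b : H, |f a - f b| ≤ G * ‖a - b‖)
    (hqc : ∀ α : ℝ, Convex ℝ {z : H | f z ≤ α})
    (ε : ℝ) (hε : 0 < ε)
    (x xstar : H) (hx : x ∈ X) (hxstar : xstar ∈ X)
    (hgap : f x - f xstar > ε)
    (Δ : H) (hΔ : ‖Δ‖ = 1)
    (hnc : ∀ z : H, f z ≤ f x → ⟪Δ, z - x⟫ ≤ 0) :
    ∀ y : H, ‖y - xstar‖ ≤ ε / G → ⟪Δ, y - x⟫ ≤ 0 := by
  intro y hy
  apply hnc
  have h1 : f y - f xstar ≤ G * ‖y - xstar‖ := (abs_le.mp (hlip y xstar)).2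
  have h2 : G * ‖y - xstar‖ ≤ ε := by
    calc G * ‖y - xstar‖ ≤ G * (ε / G) := by nlinarith
      _ = ε := by field_simp
  linarith
end

section
/- Each normalized tunnel flow is Lipschitz in the flow vector: for any tunnel p ∈ T that contains at least one edge, the function x ↦ x p / γ(x) is Lipschitz on the nonnegative orthant with respect to the ℓ1 norm, with Lipschitz constant at most 2·C_max/C_min; that is, for all x, y : T → ℝ with x, y ≥ 0 componentwise, |x p / γ(x) − y p / γ(y)| ≤ (2·C_max/C_min) · Σ_{q ∈ T} |x q − y q|. -/
open Finset

/-- Load on edge `e` induced by the flow vector `x`: `Σ_{p ∈ T, e ∈ p} x p`. -/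
noncomputable def edgeLoad {E T : Type*} [Fintype T] [DecidableEq E]
    (tun : T → Finset E) (x : T → ℝ) (e : E) : ℝ :=
  ∑ p, if e ∈ tun p then x p else 0

/-- Normalization constant `γ(x) = max (max_{e ∈ E} load_e(x) / C e) 1`. -/
noncomputable def gamma {E T : Type*} [Fintype E] [Nonempty E] [Fintype T] [DecidableEq E]
    (C : E → ℝ) (tun : T → Finset E) (x : T → ℝ) : ℝ :=
  max (univ.sup' univ_nonempty (fun e => edgeLoad tun x e / C e)) 1

lemma edgeLoad_diff_le {E T : Type*} [Fintype T] [DecidableEq E]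
    (tun : T → Finset E) (x y : T → ℝ) (e : E) :
    |edgeLoad tun x e - edgeLoad tun y e| ≤ ∑ q, |x q - y q| := by
  unfold edgeLoad
  rw [← Finset.sum_sub_distrib]
  refine (Finset.abs_sum_le_sum_abs _ _).trans (Finset.sum_le_sum fun q _ => ?_)
  split_ifs with h
  · exact le_refl _
  · simp [abs_nonneg]

lemma gamma_le {E T : Type*} [Fintype E] [Nonempty E] [Fintype T] [DecidableEq E]
    (C : E → ℝ) (hC : ∀ e, 0 < C e) (tun : T → Finset E) (x y : T → ℝ) :
    gamma C tun x ≤ gamma C tun y + (∑ q, |x q - y q|) / univ.inf' univ_nonempty C := by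
  have hCmin : (0:ℝ) < univ.inf' univ_nonempty C :=
    (Finset.lt_inf'_iff _).mpr fun e _ => hC e
  have hδ0 : (0:ℝ) ≤ ∑ q, |x q - y q| := Finset.sum_nonneg fun q _ => abs_nonneg _
  have hd0 : (0:ℝ) ≤ (∑ q, |x q - y q|) / univ.inf' univ_nonempty C := by positivity
  unfold gamma
  apply max_le
  · apply Finset.sup'_le
    intro e _
    have h1 : edgeLoad tun x e ≤ edgeLoad tun y e + ∑ q, |x q - y q| := by
      have := edgeLoad_diff_le tun x y e
      have := abs_le.mp this
      linarith [this.2]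
    have h2 : edgeLoad tun x e / C e ≤ edgeLoad tun y e / C e + (∑ q, |x q - y q|) / C e := by
      rw [← add_div]
      exact div_le_div_of_nonneg_right h1 (hC e).le
    have h3 : (∑ q, |x q - y q|) / C e ≤ (∑ q, |x q - y q|) / univ.inf' univ_nonempty C :=
      div_le_div_of_nonneg_left hδ0 hCmin (Finset.inf'_le _ (mem_univ e))
    have h4 : edgeLoad tun y e / C e ≤ gamma C tun y :=
      le_trans (Finset.le_sup' (fun e => edgeLoad tun y e / C e) (mem_univ e))
        (le_max_left _ _)
    unfold gamma at h4
    linarith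
  · have : (1:ℝ) ≤ gamma C tun y := le_max_right _ _
    unfold gamma at this
    linarith

/-- Each normalized tunnel flow `x ↦ x p / γ(x)` is Lipschitz on the nonnegative orthant
w.r.t. the ℓ1 norm, with Lipschitz constant at most `2 C_max / C_min`. -/
theorem normalized_flow_lipschitz {E T : Type*} [Fintype E] [Nonempty E] [Fintype T]
    [DecidableEq E]
    (C : E → ℝ) (hC : ∀ e, 0 < C e) (tun : T → Finset E)
    (p : T) (hp : (tun p).Nonempty)
    (x y : T → ℝ) (hx : ∀ q, 0 ≤ x q) (hy : ∀ q, 0 ≤ y q) :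
    |x p / gamma C tun x - y p / gamma C tun y| ≤
      (2 * univ.sup' univ_nonempty C / univ.inf' univ_nonempty C) * ∑ q, |x q - y q| := by
  set Cmin := univ.inf' univ_nonempty C with hCminDef
  set Cmax := univ.sup' univ_nonempty C with hCmaxDef
  set γx := gamma C tun x with hγxDef
  set γy := gamma C tun y with hγyDef
  set δ := ∑ q, |x q - y q| with hδDef
  have hCmin : (0:ℝ) < Cmin := (Finset.lt_inf'_iff _).mpr fun e _ => hC e
  have hδ0 : (0:ℝ) ≤ δ := Finset.sum_nonneg fun q _ => abs_nonneg _
  have hγx1 : (1:ℝ) ≤ γx := le_max_right _ _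
  have hγy1 : (1:ℝ) ≤ γy := le_max_right _ _
  have hγx0 : (0:ℝ) < γx := lt_of_lt_of_le one_pos hγx1
  have hγy0 : (0:ℝ) < γy := lt_of_lt_of_le one_pos hγy1
  -- |γy - γx| ≤ δ / Cmin
  have hswap : ∑ q, |y q - x q| = δ := by
    rw [hδDef]; exact Finset.sum_congr rfl fun q _ => abs_sub_comm _ _
  have hg1 : γx ≤ γy + δ / Cmin := gamma_le C hC tun x y
  have hg2 : γy ≤ γx + δ / Cmin := by
    have := gamma_le C hC tun y x
    rwa [hswap] at this
  have hgabs : |γy - γx| ≤ δ / Cmin := abs_le.mpr ⟨by linarith, by linarith⟩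
  -- y p ≤ γy * Cmax
  obtain ⟨e, he⟩ := hp
  have hyload : y p ≤ edgeLoad tun y e := by
    have := Finset.single_le_sum (f := fun q => if e ∈ tun q then y q else 0)
      (fun q _ => by split_ifs; exacts [hy q, le_refl 0]) (mem_univ p)
    simpa [edgeLoad, he] using this
  have hload_le : edgeLoad tun y e ≤ γy * C e := by
    have h2 : edgeLoad tun y e / C e ≤ γy :=
      le_trans (Finset.le_sup' (fun e => edgeLoad tun y e / C e) (mem_univ e))
        (le_max_left _ _)
    rwa [div_le_iff₀ (hC e)] at h2
  have hCeCmax : C e ≤ Cmax := Finset.le_sup' _ (mem_univ e)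
  have hCmax0 : (0:ℝ) < Cmax := lt_of_lt_of_le (hC e) hCeCmax
  have hypCmax : y p ≤ γy * Cmax :=
    le_trans hyload (le_trans hload_le (mul_le_mul_of_nonneg_left hCeCmax hγy0.le))
  have hypdiv : y p / γy ≤ Cmax := by
    rw [div_le_iff₀ hγy0]; linarith [hypCmax, mul_comm γy Cmax]
  -- |x p - y p| ≤ δ
  have hxyp : |x p - y p| ≤ δ :=
    Finset.single_le_sum (f := fun q => |x q - y q|) (fun q _ => abs_nonneg _) (mem_univ p)
  -- decomposition
  have key : x p / γx - y p / γy = (x p - y p) / γx + (y p / γy) * ((γy - γx) / γx) := by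
    field_simp
    ring
  rw [key]
  have t1 : |(x p - y p) / γx| ≤ δ := by
    rw [abs_div, abs_of_pos hγx0]
    exact le_trans (div_le_div_of_nonneg_right hxyp hγx0.le) (div_le_self hδ0 hγx1)
  have t2 : |(y p / γy) * ((γy - γx) / γx)| ≤ Cmax * (δ / Cmin) := by
    rw [abs_mul, abs_div, abs_div, abs_of_pos hγx0, abs_of_pos hγy0,
      abs_of_nonneg (hy p)]
    have h1 : y p / γy ≤ Cmax := hypdiv
    have h2 : |γy - γx| / γx ≤ δ / Cmin :=
      le_trans (div_le_self (abs_nonneg _) hγx1) hgabs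
    exact mul_le_mul h1 h2 (by positivity) hCmax0.le
  have hratio : (1:ℝ) ≤ Cmax / Cmin := by
    have hmm : Cmin ≤ Cmax := le_trans (Finset.inf'_le _ (mem_univ e)) hCeCmax
    rw [le_div_iff₀ hCmin]; linarith
  calc |(x p - y p) / γx + (y p / γy) * ((γy - γx) / γx)|
      ≤ |(x p - y p) / γx| + |(y p / γy) * ((γy - γx) / γx)| := abs_add_le _ _
    _ ≤ δ + Cmax * (δ / Cmin) := add_le_add t1 t2
    _ ≤ 2 * Cmax / Cmin * δ := by
        have h : δ * 1 ≤ δ * (Cmax / Cmin) := mul_le_mul_of_nonneg_left hratio hδ0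
        have h2 : 2 * Cmax / Cmin * δ = δ * (Cmax / Cmin) + Cmax * (δ / Cmin) := by ring
        linarith
end

section
/- The maximum-multicommodity-flow objective is Lipschitz in the flow vector: for every demand vector D : U → ℝ with D u ≥ 0 for all u (each tunnel containing at least one edge), and for all x, y : T → ℝ with x, y ≥ 0 componentwise, |f_MMCF(x, D) − f_MMCF(y, D)| ≤ 2 · (card T) · (C_max/C_min) · Σ_{p ∈ T} |x p − y p|. -/
open Finset

/-- Normalized pair flow `y_u(x) = (Σ_{p ∈ T, pair p = u} x p) / γ(x)`. -/
noncomputable def pairFlow {E T U : Type*} [Fintype E] [Nonempty E] [Fintype T]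
    [DecidableEq E] [DecidableEq U]
    (C : E → ℝ) (tun : T → Finset E) (pair : T → U) (x : T → ℝ) (u : U) : ℝ :=
  (∑ p, if pair p = u then x p else 0) / gamma C tun x

/-- Maximum-multicommodity-flow objective `f_MMCF(x, D) = Σ_{u ∈ U} min (D u) (y_u(x))`. -/
noncomputable def fMMCF {E T U : Type*} [Fintype E] [Nonempty E] [Fintype T] [Fintype U]
    [DecidableEq E] [DecidableEq U]
    (C : E → ℝ) (tun : T → Finset E) (pair : T → U) (D : U → ℝ) (x : T → ℝ) : ℝ :=
  ∑ u, min (D u) (pairFlow C tun pair x u)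

/-- The maximum-multicommodity-flow objective is Lipschitz in the flow vector w.r.t. the
ℓ1 norm, with constant `2 · (card T) · (C_max / C_min)`. -/
theorem fMMCF_lipschitz {E T U : Type*} [Fintype E] [Nonempty E] [Fintype T] [Fintype U]
    [DecidableEq E] [DecidableEq U]
    (C : E → ℝ) (hC : ∀ e, 0 < C e) (tun : T → Finset E) (htun : ∀ p, (tun p).Nonempty)
    (pair : T → U)
    (D : U → ℝ) (hD : ∀ u, 0 ≤ D u)
    (x y : T → ℝ) (hx : ∀ p, 0 ≤ x p) (hy : ∀ p, 0 ≤ y p) :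
    |fMMCF C tun pair D x - fMMCF C tun pair D y| ≤
      2 * (Fintype.card T : ℝ) * (univ.sup' univ_nonempty C / univ.inf' univ_nonempty C)
        * ∑ p, |x p - y p| := by
  classical
  set Cmin : ℝ := univ.inf' univ_nonempty C with hCmin_def
  set Cmax : ℝ := univ.sup' univ_nonempty C with hCmax_def
  have hCmin_pos : 0 < Cmin := by
    rw [hCmin_def, Finset.lt_inf'_iff]
    exact fun e _ => hC e
  have hCminCmax : Cmin ≤ Cmax := by
    obtain ⟨e⟩ := ‹Nonempty E›
    exact le_trans (Finset.inf'_le _ (mem_univ e)) (Finset.le_sup' _ (mem_univ e))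
  have hCmax_pos : 0 < Cmax := lt_of_lt_of_le hCmin_pos hCminCmax
  by_cases hT : Nonempty T
  · -- main case
    set S : ℝ := ∑ p, |x p - y p| with hS_def
    have hS0 : 0 ≤ S := Finset.sum_nonneg fun p _ => abs_nonneg _
    set γx : ℝ := gamma C tun x with hγx_def
    set γy : ℝ := gamma C tun y with hγy_def
    have hγx1 : 1 ≤ γx := le_max_right _ _
    have hγy1 : 1 ≤ γy := le_max_right _ _
    have hγx0 : 0 < γx := lt_of_lt_of_le one_pos hγx1
    have hγy0 : 0 < γy := lt_of_lt_of_le one_pos hγy1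
    -- edge load differences
    have hload : ∀ e : E, |edgeLoad tun x e - edgeLoad tun y e| ≤ S := by
      intro e
      unfold edgeLoad
      rw [← Finset.sum_sub_distrib]
      refine (Finset.abs_sum_le_sum_abs _ _).trans (Finset.sum_le_sum fun p _ => ?_)
      split_ifs <;> simp
    -- gamma difference
    have hgamma_diff : |γx - γy| ≤ S / Cmin := by
      rw [hγx_def, hγy_def]
      unfold gamma
      refine (abs_max_sub_max_le_abs _ _ _).trans ?_
      rw [abs_sub_le_iff]
      constructor
      · rw [sub_le_iff_le_add]
        refine Finset.sup'_le _ _ fun e _ => ?_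
        have h1 : edgeLoad tun x e / C e - edgeLoad tun y e / C e ≤ S / Cmin := by
          rw [div_sub_div_same]
          refine div_le_div₀ hS0 ((le_abs_self _).trans (hload e)) hCmin_pos
            (Finset.inf'_le _ (mem_univ e))
        have h2 : edgeLoad tun y e / C e ≤ univ.sup' univ_nonempty
            (fun e => edgeLoad tun y e / C e) :=
          Finset.le_sup' (fun e => edgeLoad tun y e / C e) (mem_univ e)
        linarith
      · rw [sub_le_iff_le_add]
        refine Finset.sup'_le _ _ fun e _ => ?_
        have h1 : edgeLoad tun y e / C e - edgeLoad tun x e / C e ≤ S / Cmin := by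
          rw [div_sub_div_same]
          refine div_le_div₀ hS0 ?_ hCmin_pos (Finset.inf'_le _ (mem_univ e))
          have := hload e
          rw [abs_sub_comm] at this
          exact (le_abs_self _).trans this
        have h2 : edgeLoad tun x e / C e ≤ univ.sup' univ_nonempty
            (fun e => edgeLoad tun x e / C e) :=
          Finset.le_sup' (fun e => edgeLoad tun x e / C e) (mem_univ e)
        linarith
    -- bound on the total flow of y
    have hyp_bound : ∀ p : T, y p ≤ Cmax * γy := by
      intro p
      obtain ⟨e, he⟩ := htun p
      have h1 : y p ≤ edgeLoad tun y e := by
        have := Finset.single_le_sum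
          (f := fun q => if e ∈ tun q then y q else 0)
          (fun q _ => by by_cases h : e ∈ tun q <;> simp [h, hy q]) (mem_univ p)
        simpa [he, edgeLoad] using this
      have h2 : edgeLoad tun y e / C e ≤ γy :=
        le_trans (Finset.le_sup' (fun e => edgeLoad tun y e / C e) (mem_univ e))
          (le_max_left _ _)
      have h3 : edgeLoad tun y e ≤ γy * C e := by
        rw [div_le_iff₀ (hC e)] at h2; exact h2
      have h4 : C e ≤ Cmax := Finset.le_sup' _ (mem_univ e)
      nlinarith [hC e, hγy0]
    have hsumy : ∑ p, y p ≤ (Fintype.card T : ℝ) * (Cmax * γy) := by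
      calc ∑ p, y p ≤ (univ : Finset T).card • (Cmax * γy) :=
            Finset.sum_le_card_nsmul _ _ _ (fun p _ => hyp_bound p)
        _ = (Fintype.card T : ℝ) * (Cmax * γy) := by
            rw [nsmul_eq_mul, Finset.card_univ]
    -- pair sums
    set sx : U → ℝ := fun u => ∑ p, if pair p = u then x p else 0 with hsx_def
    set sy : U → ℝ := fun u => ∑ p, if pair p = u then y p else 0 with hsy_def
    have hsy_nonneg : ∀ u, 0 ≤ sy u := fun u =>
      Finset.sum_nonneg fun p _ => by split_ifs; exacts [hy p, le_rfl]
    have hsum_diff : ∑ u, |sx u - sy u| ≤ S := by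
      have h1 : ∀ u, |sx u - sy u| ≤ ∑ p, if pair p = u then |x p - y p| else 0 := by
        intro u
        rw [hsx_def, hsy_def]
        simp only
        rw [← Finset.sum_sub_distrib]
        refine (Finset.abs_sum_le_sum_abs _ _).trans (Finset.sum_le_sum fun p _ => ?_)
        split_ifs <;> simp
      calc ∑ u, |sx u - sy u| ≤ ∑ u, ∑ p, if pair p = u then |x p - y p| else 0 :=
            Finset.sum_le_sum fun u _ => h1 u
        _ = ∑ p, ∑ u, if pair p = u then |x p - y p| else 0 := Finset.sum_comm
        _ = S := by
            rw [hS_def]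
            refine Finset.sum_congr rfl fun p _ => ?_
            simp [Finset.sum_ite_eq]
    have hsum_sy : ∑ u, sy u = ∑ p, y p := by
      rw [hsy_def]
      simp only
      rw [Finset.sum_comm]
      refine Finset.sum_congr rfl fun p _ => ?_
      simp [Finset.sum_ite_eq]
    -- per-pair flow differences
    have hkey : ∑ u, |pairFlow C tun pair x u - pairFlow C tun pair y u| ≤
        S + (Fintype.card T : ℝ) * (Cmax / Cmin) * S := by
      have hid : ∀ u, pairFlow C tun pair x u - pairFlow C tun pair y u =
          (sx u - sy u) / γx + sy u * ((γy - γx) / (γx * γy)) := by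
        intro u
        unfold pairFlow
        show sx u / γx - sy u / γy = _
        field_simp
        ring
      have hterm : ∀ u, |pairFlow C tun pair x u - pairFlow C tun pair y u| ≤
          |sx u - sy u| / γx + sy u * (|γy - γx| / (γx * γy)) := by
        intro u
        rw [hid u]
        refine (abs_add_le _ _).trans ?_
        rw [abs_div, abs_of_pos hγx0, abs_mul, abs_of_nonneg (hsy_nonneg u),
          abs_div, abs_of_pos (mul_pos hγx0 hγy0)]
      calc ∑ u, |pairFlow C tun pair x u - pairFlow C tun pair y u|
          ≤ ∑ u, (|sx u - sy u| / γx + sy u * (|γy - γx| / (γx * γy))) :=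
            Finset.sum_le_sum fun u _ => hterm u
        _ = (∑ u, |sx u - sy u|) / γx + (∑ u, sy u) * (|γy - γx| / (γx * γy)) := by
            rw [Finset.sum_add_distrib, ← Finset.sum_div, ← Finset.sum_mul]
        _ ≤ S + (Fintype.card T : ℝ) * (Cmax / Cmin) * S := by
            have h1 : (∑ u, |sx u - sy u|) / γx ≤ S := by
              refine le_trans (div_le_self ?_ hγx1) hsum_diff
              exact Finset.sum_nonneg fun u _ => abs_nonneg _
            have h2 : (∑ u, sy u) * (|γy - γx| / (γx * γy)) ≤
                (Fintype.card T : ℝ) * (Cmax / Cmin) * S := by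
              have hb1 : ∑ u, sy u ≤ (Fintype.card T : ℝ) * (Cmax * γy) := by
                rw [hsum_sy]; exact hsumy
              have hb2 : |γy - γx| / (γx * γy) ≤ (S / Cmin) / (γx * γy) := by
                refine div_le_div₀ (div_nonneg hS0 hCmin_pos.le) ?_
                  (mul_pos hγx0 hγy0) le_rfl
                rw [abs_sub_comm]; exact hgamma_diff
              have hb3 : (∑ u, sy u) * (|γy - γx| / (γx * γy)) ≤
                  ((Fintype.card T : ℝ) * (Cmax * γy)) * ((S / Cmin) / (γx * γy)) := by
                refine mul_le_mul hb1 hb2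
                  (div_nonneg (abs_nonneg _) (mul_pos hγx0 hγy0).le) ?_
                exact mul_nonneg (Nat.cast_nonneg _) (mul_nonneg hCmax_pos.le hγy0.le)
              refine hb3.trans ?_
              have he : ((Fintype.card T : ℝ) * (Cmax * γy)) * ((S / Cmin) / (γx * γy)) =
                  ((Fintype.card T : ℝ) * (Cmax / Cmin) * S) * (1 / γx) := by
                field_simp
              rw [he]
              refine mul_le_of_le_one_right ?_ ?_
              · exact mul_nonneg (mul_nonneg (Nat.cast_nonneg _)
                  (div_nonneg hCmax_pos.le hCmin_pos.le)) hS0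
              · rw [div_le_one hγx0]; exact hγx1
            linarith
    -- final assembly
    have hfinal : |fMMCF C tun pair D x - fMMCF C tun pair D y| ≤
        ∑ u, |pairFlow C tun pair x u - pairFlow C tun pair y u| := by
      unfold fMMCF
      rw [← Finset.sum_sub_distrib]
      refine (Finset.abs_sum_le_sum_abs _ _).trans (Finset.sum_le_sum fun u _ => ?_)
      refine (abs_min_sub_min_le_max _ _ _ _).trans ?_
      simp
    have hcard1 : (1 : ℝ) ≤ (Fintype.card T : ℝ) := by
      have := Fintype.card_pos_iff.mpr hT
      exact_mod_cast this
    have hratio1 : (1 : ℝ) ≤ Cmax / Cmin := (one_le_div hCmin_pos).mpr hCminCmax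
    have hS_le : S ≤ (Fintype.card T : ℝ) * (Cmax / Cmin) * S := by
      refine le_mul_of_one_le_left hS0 ?_
      nlinarith
    calc |fMMCF C tun pair D x - fMMCF C tun pair D y|
        ≤ ∑ u, |pairFlow C tun pair x u - pairFlow C tun pair y u| := hfinal
      _ ≤ S + (Fintype.card T : ℝ) * (Cmax / Cmin) * S := hkey
      _ ≤ 2 * (Fintype.card T : ℝ) * (Cmax / Cmin) * S := by linarith
  · -- T empty
    have hTe : IsEmpty T := not_nonempty_iff.mp hT
    have hzero : ∀ z : T → ℝ, fMMCF C tun pair D z = 0 := by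
      intro z
      unfold fMMCF pairFlow
      rw [Finset.sum_eq_zero]
      intro u _
      rw [Finset.univ_eq_empty, Finset.sum_empty, zero_div, min_eq_right (hD u)]
    rw [hzero x, hzero y, sub_zero, abs_zero]
    have : (∑ p, |x p - y p|) = 0 := by rw [Finset.univ_eq_empty, Finset.sum_empty]
    rw [this, mul_zero]
end

section
/- The average of maximum-multicommodity-flow objectives over any finite set of demand matrices is quasi-concave in the flow vector: for any M ≥ 1 and demand vectors D¹, …, D^M : U → ℝ with D^i u ≥ 0 for all i and u, the function g(x) = (1/M) · Σ_{i=1}^M f_MMCF(x, D^i) satisfies g(λ·x + (1−λ)·x') ≥ min(g(x), g(x')) for all x, x' : T → ℝ with x, x' ≥ 0 componentwise and all λ ∈ [0,1]. -/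
open Finset

/-- The average of maximum-multicommodity-flow objectives over any finite set of
nonnegative demand matrices is quasi-concave in the flow vector. -/
theorem avg_fMMCF_quasiconcave {E T U : Type*} [Fintype E] [Nonempty E] [Fintype T] [Fintype U]
    [DecidableEq E] [DecidableEq U]
    (C : E → ℝ) (hC : ∀ e, 0 < C e) (tun : T → Finset E) (htun : ∀ p, (tun p).Nonempty)
    (pair : T → U)
    (M : ℕ) (hM : 1 ≤ M) (D : Fin M → U → ℝ) (hD : ∀ i u, 0 ≤ D i u)
    (x x' : T → ℝ) (hx : ∀ p, 0 ≤ x p) (hx' : ∀ p, 0 ≤ x' p)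
    (lam : ℝ) (hlam0 : 0 ≤ lam) (hlam1 : lam ≤ 1) :
    min ((M : ℝ)⁻¹ * ∑ i, fMMCF C tun pair (D i) x)
        ((M : ℝ)⁻¹ * ∑ i, fMMCF C tun pair (D i) x')
      ≤ (M : ℝ)⁻¹ * ∑ i, fMMCF C tun pair (D i) (fun p => lam * x p + (1 - lam) * x' p) := by
  set z : T → ℝ := fun p => lam * x p + (1 - lam) * x' p with hz
  have hγx1 : (1:ℝ) ≤ gamma C tun x := le_max_right _ _
  have hγx'1 : (1:ℝ) ≤ gamma C tun x' := le_max_right _ _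
  have hγz1 : (1:ℝ) ≤ gamma C tun z := le_max_right _ _
  have hγx0 : (0:ℝ) < gamma C tun x := lt_of_lt_of_le one_pos hγx1
  have hγx'0 : (0:ℝ) < gamma C tun x' := lt_of_lt_of_le one_pos hγx'1
  have hγz0 : (0:ℝ) < gamma C tun z := lt_of_lt_of_le one_pos hγz1
  set S : ℝ := lam * gamma C tun x + (1 - lam) * gamma C tun x' with hSdef
  have hS1 : (1:ℝ) ≤ S := by nlinarith
  have hS0 : (0:ℝ) < S := lt_of_lt_of_le one_pos hS1
  set μ : ℝ := lam * gamma C tun x / S with hμdef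
  have hμ0 : 0 ≤ μ := div_nonneg (mul_nonneg hlam0 hγx0.le) hS0.le
  have hμ1 : μ ≤ 1 := by
    rw [hμdef, div_le_one hS0]
    nlinarith
  have h1μ : 1 - μ = (1 - lam) * gamma C tun x' / S := by
    rw [hμdef]
    field_simp
    rw [hSdef]
    ring
  -- linearity of edge loads
  have hload : ∀ e, edgeLoad tun z e = lam * edgeLoad tun x e + (1 - lam) * edgeLoad tun x' e := by
    intro e
    unfold edgeLoad
    rw [Finset.mul_sum, Finset.mul_sum, ← Finset.sum_add_distrib]
    refine Finset.sum_congr rfl fun p _ => ?_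
    by_cases h : e ∈ tun p <;> simp [h, hz]
  -- convexity of gamma
  have hγconv : gamma C tun z ≤ S := by
    apply max_le _ hS1
    apply Finset.sup'_le
    intro e _
    have hxe : edgeLoad tun x e / C e ≤ gamma C tun x :=
      le_trans (Finset.le_sup' (fun e => edgeLoad tun x e / C e) (mem_univ e)) (le_max_left _ _)
    have hx'e : edgeLoad tun x' e / C e ≤ gamma C tun x' :=
      le_trans (Finset.le_sup' (fun e => edgeLoad tun x' e / C e) (mem_univ e)) (le_max_left _ _)
    have : edgeLoad tun z e / C e
        = lam * (edgeLoad tun x e / C e) + (1 - lam) * (edgeLoad tun x' e / C e) := by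
      rw [hload e, add_div, mul_div_assoc, mul_div_assoc]
    rw [this]
    have h1l : (0:ℝ) ≤ 1 - lam := by linarith
    exact add_le_add (mul_le_mul_of_nonneg_left hxe hlam0)
      (mul_le_mul_of_nonneg_left hx'e h1l)
  -- key pointwise bound on pair flows
  have hkey : ∀ u, μ * pairFlow C tun pair x u + (1 - μ) * pairFlow C tun pair x' u
      ≤ pairFlow C tun pair z u := by
    intro u
    set Nx : ℝ := ∑ p, if pair p = u then x p else 0 with hNx
    set Nx' : ℝ := ∑ p, if pair p = u then x' p else 0 with hNx'
    have hNz : (∑ p, if pair p = u then z p else 0) = lam * Nx + (1 - lam) * Nx' := by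
      rw [hNx, hNx', Finset.mul_sum, Finset.mul_sum, ← Finset.sum_add_distrib]
      refine Finset.sum_congr rfl fun p _ => ?_
      by_cases h : pair p = u <;> simp [h, hz]
    have hNx0 : 0 ≤ Nx := Finset.sum_nonneg fun p _ => by
      by_cases h : pair p = u <;> simp [h, hx p]
    have hNx'0 : 0 ≤ Nx' := Finset.sum_nonneg fun p _ => by
      by_cases h : pair p = u <;> simp [h, hx' p]
    have hNz0 : 0 ≤ lam * Nx + (1 - lam) * Nx' := by nlinarith
    have h1 : (lam * Nx + (1 - lam) * Nx') / S ≤ (lam * Nx + (1 - lam) * Nx') / gamma C tun z :=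
      div_le_div_of_nonneg_left hNz0 hγz0 hγconv
    have h2 : μ * (Nx / gamma C tun x) + (1 - μ) * (Nx' / gamma C tun x')
        = (lam * Nx + (1 - lam) * Nx') / S := by
      rw [hμdef, h1μ]
      field_simp
    show μ * (Nx / gamma C tun x) + (1 - μ) * (Nx' / gamma C tun x')
        ≤ (∑ p, if pair p = u then z p else 0) / gamma C tun z
    rw [hNz, h2]
    exact h1
  -- concavity of min with a fixed first argument
  have hmin : ∀ c a b : ℝ, μ * min c a + (1 - μ) * min c b ≤ min c (μ * a + (1 - μ) * b) := by
    intro c a b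
    apply le_min
    · nlinarith [min_le_left c a, min_le_left c b]
    · nlinarith [min_le_right c a, min_le_right c b]
  -- per-demand-matrix bound
  have hf : ∀ i, μ * fMMCF C tun pair (D i) x + (1 - μ) * fMMCF C tun pair (D i) x'
      ≤ fMMCF C tun pair (D i) z := by
    intro i
    unfold fMMCF
    rw [Finset.mul_sum, Finset.mul_sum, ← Finset.sum_add_distrib]
    refine Finset.sum_le_sum fun u _ => ?_
    calc μ * min (D i u) (pairFlow C tun pair x u)
          + (1 - μ) * min (D i u) (pairFlow C tun pair x' u)
        ≤ min (D i u) (μ * pairFlow C tun pair x u + (1 - μ) * pairFlow C tun pair x' u) :=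
          hmin _ _ _
      _ ≤ min (D i u) (pairFlow C tun pair z u) := min_le_min le_rfl (hkey u)
  -- assemble
  have hMinv : (0:ℝ) ≤ (M : ℝ)⁻¹ := by positivity
  set A : ℝ := (M : ℝ)⁻¹ * ∑ i, fMMCF C tun pair (D i) x with hA
  set B : ℝ := (M : ℝ)⁻¹ * ∑ i, fMMCF C tun pair (D i) x' with hB
  have hsum : μ * A + (1 - μ) * B ≤ (M : ℝ)⁻¹ * ∑ i, fMMCF C tun pair (D i) z := by
    rw [hA, hB]
    have : ∑ i, (μ * fMMCF C tun pair (D i) x + (1 - μ) * fMMCF C tun pair (D i) x')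
        ≤ ∑ i, fMMCF C tun pair (D i) z := Finset.sum_le_sum fun i _ => hf i
    rw [Finset.sum_add_distrib, ← Finset.mul_sum, ← Finset.mul_sum] at this
    nlinarith
  have : min A B ≤ μ * A + (1 - μ) * B := by
    nlinarith [min_le_left A B, min_le_right A B]
  linarith
end

section
/- The maximum-concurrent-flow objective is Lipschitz in the flow vector: let ε > 0 and let D : U → ℝ be a demand vector with D u ≥ 0 for all u and such that every nonzero demand satisfies D u ≥ ε. Then, each tunnel containing at least one edge, for all x, y : T → ℝ with x, y ≥ 0 componentwise, |f_MCONC(x, D) − f_MCONC(y, D)| ≤ (max_{u ∈ U} card {p ∈ T : pair p = u}) · (2·C_max / (ε·C_min)) · Σ_{p ∈ T} |x p − y p|. -/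
open Finset

/-- Maximum-concurrent-flow objective: the minimum of the finite set
`{y_u(x) / D u : u ∈ U, D u > 0} ∪ {1}`. -/
noncomputable def fMCONC {E T U : Type*} [Fintype E] [Nonempty E] [Fintype T] [Fintype U]
    [DecidableEq E] [DecidableEq U]
    (C : E → ℝ) (tun : T → Finset E) (pair : T → U) (D : U → ℝ) (x : T → ℝ) : ℝ :=
  Finset.fold min 1 (fun u => pairFlow C tun pair x u / D u) (univ.filter fun u => 0 < D u)


/-- Folding `min` over a finset is 1-Lipschitz. -/
lemma foldMin_lipschitz {U : Type*} [DecidableEq U] (s : Finset U) (f g : U → ℝ) (K : ℝ)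
    (hK : 0 ≤ K) (h : ∀ u ∈ s, |f u - g u| ≤ K) :
    |s.fold min 1 f - s.fold min 1 g| ≤ K := by
  induction s using Finset.cons_induction with
  | empty => simpa using hK
  | cons a s ha ih =>
    rw [Finset.fold_cons, Finset.fold_cons]
    refine (abs_min_sub_min_le_max _ _ _ _).trans
      (max_le (h a (mem_cons_self _ _)) (ih fun u hu => h u (mem_cons_of_mem hu)))

/-- The maximum-concurrent-flow objective is Lipschitz in the flow vector w.r.t. the ℓ1 norm,
with constant `(max_u #{p : pair p = u}) · 2 C_max / (ε C_min)`, where every nonzero demand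
is at least `ε`. -/
theorem fMCONC_lipschitz {E T U : Type*} [Fintype E] [Nonempty E] [Fintype T] [Fintype U]
    [DecidableEq E] [DecidableEq U]
    (C : E → ℝ) (hC : ∀ e, 0 < C e) (tun : T → Finset E) (htun : ∀ p, (tun p).Nonempty)
    (pair : T → U)
    (ε : ℝ) (hε : 0 < ε)
    (D : U → ℝ) (hD : ∀ u, 0 ≤ D u) (hDε : ∀ u, D u ≠ 0 → ε ≤ D u)
    (x y : T → ℝ) (hx : ∀ p, 0 ≤ x p) (hy : ∀ p, 0 ≤ y p) :
    |fMCONC C tun pair D x - fMCONC C tun pair D y| ≤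
      ((univ.sup fun u => (univ.filter fun p => pair p = u).card : ℕ) : ℝ)
        * (2 * univ.sup' univ_nonempty C / (ε * univ.inf' univ_nonempty C))
        * ∑ p, |x p - y p| := by
  classical
  set Cmax := univ.sup' univ_nonempty C with hCmaxdef
  set Cmin := univ.inf' univ_nonempty C with hCmindef
  set δ := ∑ p, |x p - y p| with hδdef
  set N : ℝ := ((univ.sup fun u => (univ.filter fun p => pair p = u).card : ℕ) : ℝ) with hNdef
  rcases isEmpty_or_nonempty T with hT | hT
  · have hxy : x = y := funext fun p => (hT.false p).elim
    subst hxy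
    simp [hδdef]
  -- basic constants
  have hCmin : 0 < Cmin := (Finset.lt_inf'_iff _).mpr fun e _ => hC e
  have hCmaxmin : Cmin ≤ Cmax := by
    obtain ⟨e⟩ := ‹Nonempty E›
    exact (Finset.inf'_le _ (mem_univ e)).trans (Finset.le_sup' _ (mem_univ e))
  have hCmax : 0 < Cmax := hCmin.trans_le hCmaxmin
  have hδ0 : 0 ≤ δ := Finset.sum_nonneg fun _ _ => abs_nonneg _
  have hN1 : (1 : ℝ) ≤ N := by
    obtain ⟨p0⟩ := hT
    have h1 : 1 ≤ (univ.filter fun p => pair p = pair p0).card :=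
      Finset.card_pos.mpr ⟨p0, by simp⟩
    have h2 := Finset.le_sup (f := fun u => (univ.filter fun p => pair p = u).card)
      (mem_univ (pair p0))
    rw [hNdef]
    exact_mod_cast h1.trans h2
  have hγ1 : ∀ z : T → ℝ, (1 : ℝ) ≤ gamma C tun z := fun z => le_max_right _ _
  have hγ0 : ∀ z : T → ℝ, (0 : ℝ) < gamma C tun z := fun z => one_pos.trans_le (hγ1 z)
  -- edge loads are Lipschitz
  have hload : ∀ (a b : T → ℝ) e, |edgeLoad tun a e - edgeLoad tun b e| ≤ ∑ p, |a p - b p| := by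
    intro a b e
    rw [edgeLoad, edgeLoad, ← Finset.sum_sub_distrib]
    refine (Finset.abs_sum_le_sum_abs _ _).trans (Finset.sum_le_sum fun p _ => ?_)
    split <;> simp [abs_nonneg]
  have habsxy : ∀ p, |y p - x p| = |x p - y p| := fun p => abs_sub_comm _ _
  -- gamma is Lipschitz
  have hγle : ∀ a b : T → ℝ, (∀ e, |edgeLoad tun a e - edgeLoad tun b e| ≤ δ) →
      gamma C tun a ≤ gamma C tun b + δ / Cmin := by
    intro a b hl
    have hd0 : 0 ≤ δ / Cmin := div_nonneg hδ0 hCmin.le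
    rw [gamma]
    apply max_le
    · apply Finset.sup'_le
      intro e _
      have h1 : edgeLoad tun a e ≤ edgeLoad tun b e + δ := by
        have := (abs_sub_le_iff.mp (hl e)).1; linarith
      have h2 : edgeLoad tun b e / C e ≤ gamma C tun b :=
        (Finset.le_sup' (fun e => edgeLoad tun b e / C e) (mem_univ e)).trans (le_max_left _ _)
      have h3 : δ / C e ≤ δ / Cmin := by
        gcongr
        exact Finset.inf'_le _ (mem_univ e)
      have h4 : edgeLoad tun a e / C e ≤ edgeLoad tun b e / C e + δ / C e := by
        rw [← add_div]
        gcongr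
        exact (hC e).le
      linarith
    · linarith [hγ1 b]
  have hγdiff : |gamma C tun x - gamma C tun y| ≤ δ / Cmin := by
    rw [abs_sub_le_iff]
    constructor
    · linarith [hγle x y (fun e => hload x y e)]
    · have : ∀ e, |edgeLoad tun y e - edgeLoad tun x e| ≤ δ := by
        intro e
        calc |edgeLoad tun y e - edgeLoad tun x e|
            = |edgeLoad tun x e - edgeLoad tun y e| := abs_sub_comm _ _
          _ ≤ δ := hload x y e
      linarith [hγle y x this]
  -- pair sums are bounded by N * Cmax * gamma
  have hSle : ∀ (z : T → ℝ), (∀ p, 0 ≤ z p) → ∀ u,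
      (∑ p, if pair p = u then z p else 0) ≤ N * (Cmax * gamma C tun z) := by
    intro z hz u
    have hterm : ∀ p, z p ≤ Cmax * gamma C tun z := by
      intro p
      obtain ⟨e, he⟩ := htun p
      have h1 : z p ≤ edgeLoad tun z e := by
        rw [edgeLoad]
        have := Finset.single_le_sum (f := fun q => if e ∈ tun q then z q else 0)
          (fun q _ => by split <;> simp [hz q]) (mem_univ p)
        simpa [he] using this
      have h3 : edgeLoad tun z e / C e ≤ gamma C tun z :=
        (Finset.le_sup' (fun e => edgeLoad tun z e / C e) (mem_univ e)).trans (le_max_left _ _)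
      have h2 : edgeLoad tun z e ≤ gamma C tun z * C e := by
        rw [div_le_iff₀ (hC e)] at h3; exact h3
      have h5 : C e ≤ Cmax := Finset.le_sup' _ (mem_univ e)
      calc z p ≤ gamma C tun z * C e := h1.trans h2
        _ ≤ gamma C tun z * Cmax := by
            have := (hγ0 z).le
            gcongr
        _ = Cmax * gamma C tun z := mul_comm _ _
    have hM0 : 0 ≤ Cmax * gamma C tun z := mul_nonneg hCmax.le (hγ0 z).le
    rw [← Finset.sum_filter]
    calc (∑ p ∈ univ.filter fun p => pair p = u, z p)
        ≤ (univ.filter fun p => pair p = u).card • (Cmax * gamma C tun z) :=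
          Finset.sum_le_card_nsmul _ _ _ (fun p _ => hterm p)
      _ = ((univ.filter fun p => pair p = u).card : ℝ) * (Cmax * gamma C tun z) := by
          rw [nsmul_eq_mul]
      _ ≤ N * (Cmax * gamma C tun z) := by
          gcongr
          rw [hNdef]
          exact_mod_cast Finset.le_sup (f := fun u => (univ.filter fun p => pair p = u).card)
            (mem_univ u)
  set K := N * (2 * Cmax / (ε * Cmin)) * δ with hKdef
  have hK0 : 0 ≤ K := by
    apply mul_nonneg (mul_nonneg (by linarith) _) hδ0
    positivity
  rw [fMCONC, fMCONC]
  apply foldMin_lipschitz _ _ _ _ hK0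
  intro u hu
  have hDu : 0 < D u := (mem_filter.mp hu).2
  have hεD : ε ≤ D u := hDε u hDu.ne'
  set Sx := ∑ p, if pair p = u then x p else 0 with hSxdef
  set Sy := ∑ p, if pair p = u then y p else 0 with hSydef
  set γx := gamma C tun x with hγxdef
  set γy := gamma C tun y with hγydef
  have hγx0 : 0 < γx := hγ0 x
  have hγy0 : 0 < γy := hγ0 y
  have hSy0 : 0 ≤ Sy := Finset.sum_nonneg fun p _ => by split <;> simp [hy p]
  have key : |Sx / γx - Sy / γy| ≤ δ + N * Cmax * (δ / Cmin) := by
    have heq : Sx / γx - Sy / γy = (Sx - Sy) / γx + Sy / γy * ((γy - γx) / γx) := by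
      field_simp
      ring
    rw [heq]
    refine (abs_add_le _ _).trans ?_
    have hS : |Sx - Sy| ≤ δ := by
      rw [hSxdef, hSydef, ← Finset.sum_sub_distrib]
      refine (Finset.abs_sum_le_sum_abs _ _).trans (Finset.sum_le_sum fun p _ => ?_)
      split <;> simp [abs_nonneg]
    have h1 : |(Sx - Sy) / γx| ≤ δ := by
      rw [abs_div, abs_of_pos hγx0]
      calc |Sx - Sy| / γx ≤ |Sx - Sy| / 1 := by gcongr; exact hγ1 x
        _ = |Sx - Sy| := div_one _
        _ ≤ δ := hS
    have h2 : |Sy / γy * ((γy - γx) / γx)| ≤ N * Cmax * (δ / Cmin) := by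
      rw [abs_mul]
      have ha : |Sy / γy| ≤ N * Cmax := by
        rw [abs_of_nonneg (div_nonneg hSy0 hγy0.le), div_le_iff₀ hγy0]
        calc Sy ≤ N * (Cmax * γy) := hSle y hy u
          _ = N * Cmax * γy := by ring
      have hb : |(γy - γx) / γx| ≤ δ / Cmin := by
        rw [abs_div, abs_of_pos hγx0]
        calc |γy - γx| / γx ≤ |γy - γx| / 1 := by gcongr; exact hγ1 x
          _ = |γy - γx| := div_one _
          _ = |γx - γy| := abs_sub_comm _ _
          _ ≤ δ / Cmin := hγdiff
      exact mul_le_mul ha hb (abs_nonneg _) (by positivity)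
    linarith
  have hfin : δ + N * Cmax * (δ / Cmin) ≤ 2 * N * Cmax * δ / Cmin := by
    have h1 : δ ≤ N * Cmax * (δ / Cmin) := by
      rw [mul_div_assoc' , le_div_iff₀ hCmin]
      have hNC : Cmin ≤ N * Cmax := by nlinarith
      nlinarith [mul_le_mul_of_nonneg_left hNC hδ0]
    have hE : 2 * N * Cmax * δ / Cmin = N * Cmax * (δ / Cmin) + N * Cmax * (δ / Cmin) := by
      ring
    linarith
  have hnum0 : 0 ≤ 2 * N * Cmax * δ / Cmin := by positivity
  calc |pairFlow C tun pair x u / D u - pairFlow C tun pair y u / D u|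
      = |Sx / γx - Sy / γy| / D u := by
        rw [div_sub_div_same, abs_div, abs_of_pos hDu]
        rfl
    _ ≤ (2 * N * Cmax * δ / Cmin) / D u := by gcongr; exact key.trans hfin
    _ ≤ (2 * N * Cmax * δ / Cmin) / ε := by gcongr
    _ = K := by rw [hKdef]; field_simp
end

section
/- The average of maximum-concurrent-flow objectives over any finite set of demand matrices is quasi-concave in the flow vector: for any M ≥ 1 and demand vectors D¹, …, D^M : U → ℝ with D^i u ≥ 0 for all i and u, the function g(x) = (1/M) · Σ_{i=1}^M f_MCONC(x, D^i) satisfies g(λ·x + (1−λ)·x') ≥ min(g(x), g(x')) for all x, x' : T → ℝ with x, x' ≥ 0 componentwise and all λ ∈ [0,1]. -/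
open Finset

section helpers
variable {E T U : Type*} [Fintype E] [Nonempty E] [Fintype T] [Fintype U]
  [DecidableEq E] [DecidableEq U]

lemma one_le_gamma (C : E → ℝ) (tun : T → Finset E) (x : T → ℝ) : 1 ≤ gamma C tun x :=
  le_max_right _ _

lemma gamma_pos (C : E → ℝ) (tun : T → Finset E) (x : T → ℝ) : 0 < gamma C tun x :=
  lt_of_lt_of_le one_pos (one_le_gamma C tun x)

lemma le_gamma (C : E → ℝ) (tun : T → Finset E) (x : T → ℝ) (e : E) :
    edgeLoad tun x e / C e ≤ gamma C tun x :=
  le_max_of_le_left (Finset.le_sup' (fun e => edgeLoad tun x e / C e) (mem_univ e))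

lemma edgeLoad_comb (tun : T → Finset E) (x x' : T → ℝ) (lam : ℝ) (e : E) :
    edgeLoad tun (fun p => lam * x p + (1-lam) * x' p) e
      = lam * edgeLoad tun x e + (1-lam) * edgeLoad tun x' e := by
  simp only [edgeLoad, Finset.mul_sum, ← Finset.sum_add_distrib]
  refine Finset.sum_congr rfl fun p _ => ?_
  by_cases h : e ∈ tun p <;> simp [h]

lemma gamma_comb_le (C : E → ℝ) (tun : T → Finset E)
    (x x' : T → ℝ) (lam : ℝ) (h0 : 0 ≤ lam) (h1 : lam ≤ 1) :
    gamma C tun (fun p => lam * x p + (1-lam) * x' p)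
      ≤ lam * gamma C tun x + (1-lam) * gamma C tun x' := by
  have h1' : (0:ℝ) ≤ 1 - lam := by linarith
  apply max_le
  · rw [Finset.sup'_le_iff]
    intro e _
    rw [edgeLoad_comb, add_div, mul_div_assoc, mul_div_assoc]
    exact add_le_add (mul_le_mul_of_nonneg_left (le_gamma C tun x e) h0)
      (mul_le_mul_of_nonneg_left (le_gamma C tun x' e) h1')
  · calc (1:ℝ) = lam * 1 + (1-lam) * 1 := by ring
      _ ≤ _ := add_le_add (mul_le_mul_of_nonneg_left (one_le_gamma C tun x) h0)
        (mul_le_mul_of_nonneg_left (one_le_gamma C tun x') h1')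

lemma fMCONC_le_one (C : E → ℝ) (tun : T → Finset E) (pair : T → U) (D : U → ℝ) (x : T → ℝ) :
    fMCONC C tun pair D x ≤ 1 :=
  (Finset.fold_min_le _).2 (Or.inl le_rfl)

end helpers

/-- The average of maximum-concurrent-flow objectives over any finite set of nonnegative
demand matrices is quasi-concave in the flow vector. -/
theorem avg_fMCONC_quasiconcave {E T U : Type*} [Fintype E] [Nonempty E] [Fintype T] [Fintype U]
    [DecidableEq E] [DecidableEq U]
    (C : E → ℝ) (hC : ∀ e, 0 < C e) (tun : T → Finset E) (htun : ∀ p, (tun p).Nonempty)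
    (pair : T → U)
    (M : ℕ) (hM : 1 ≤ M) (D : Fin M → U → ℝ) (hD : ∀ i u, 0 ≤ D i u)
    (x x' : T → ℝ) (hx : ∀ p, 0 ≤ x p) (hx' : ∀ p, 0 ≤ x' p)
    (lam : ℝ) (hlam0 : 0 ≤ lam) (hlam1 : lam ≤ 1) :
    min ((M : ℝ)⁻¹ * ∑ i, fMCONC C tun pair (D i) x)
        ((M : ℝ)⁻¹ * ∑ i, fMCONC C tun pair (D i) x')
      ≤ (M : ℝ)⁻¹ * ∑ i, fMCONC C tun pair (D i) (fun p => lam * x p + (1 - lam) * x' p) := by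
  have h1' : (0:ℝ) ≤ 1 - lam := by linarith
  set z : T → ℝ := fun p => lam * x p + (1 - lam) * x' p with hzdef
  have hz0 : ∀ p, 0 ≤ z p := fun p =>
    add_nonneg (mul_nonneg hlam0 (hx p)) (mul_nonneg h1' (hx' p))
  set γx := gamma C tun x with hγxdef
  set γx' := gamma C tun x' with hγx'def
  set γz := gamma C tun z with hγzdef
  have hγx : 0 < γx := gamma_pos C tun x
  have hγx' : 0 < γx' := gamma_pos C tun x'
  have hγz : 0 < γz := gamma_pos C tun z
  set Γ : ℝ := lam * γx + (1 - lam) * γx' with hΓdef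
  have hΓpos : 0 < Γ := by
    have := one_le_gamma C tun x
    have := one_le_gamma C tun x'
    have h := add_le_add (mul_le_mul_of_nonneg_left (one_le_gamma C tun x) hlam0)
      (mul_le_mul_of_nonneg_left (one_le_gamma C tun x') h1')
    simp only [mul_one] at h
    have : (1:ℝ) ≤ Γ := by rw [hΓdef]; linarith
    linarith
  have hγzΓ : γz ≤ Γ := gamma_comb_le C tun x x' lam hlam0 hlam1
  have key : ∀ i, (lam * γx * fMCONC C tun pair (D i) x
      + (1 - lam) * γx' * fMCONC C tun pair (D i) x') / Γ
      ≤ fMCONC C tun pair (D i) z := by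
    intro i
    conv_rhs => rw [fMCONC]
    rw [Finset.le_fold_min]
    constructor
    · rw [div_le_one hΓpos]
      have h1 := fMCONC_le_one C tun pair (D i) x
      have h2 := fMCONC_le_one C tun pair (D i) x'
      have a1 : lam * γx * fMCONC C tun pair (D i) x ≤ lam * γx * 1 :=
        mul_le_mul_of_nonneg_left h1 (mul_nonneg hlam0 hγx.le)
      have a2 : (1 - lam) * γx' * fMCONC C tun pair (D i) x' ≤ (1 - lam) * γx' * 1 :=
        mul_le_mul_of_nonneg_left h2 (mul_nonneg h1' hγx'.le)
      rw [hΓdef]; linarith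
    · intro u hu
      rw [mem_filter] at hu
      have hDu : 0 < D i u := hu.2
      have hmemz : u ∈ (univ.filter fun u => 0 < D i u) := by
        rw [mem_filter]; exact ⟨mem_univ u, hDu⟩
      have hsz : (∑ p, if pair p = u then z p else 0)
          = lam * (∑ p, if pair p = u then x p else 0)
            + (1 - lam) * (∑ p, if pair p = u then x' p else 0) := by
        simp only [Finset.mul_sum, ← Finset.sum_add_distrib]
        refine Finset.sum_congr rfl fun p _ => ?_
        by_cases h : pair p = u <;> simp [h, hzdef]
      have hsz0 : 0 ≤ (∑ p, if pair p = u then z p else 0) :=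
        Finset.sum_nonneg fun p _ => by by_cases h : pair p = u <;> simp [h, hz0 p]
      have hbound : ∀ (w : T → ℝ), (0 < gamma C tun w) →
          gamma C tun w * fMCONC C tun pair (D i) w
            ≤ (∑ p, if pair p = u then w p else 0) / D i u := by
        intro w hw
        have e1 : fMCONC C tun pair (D i) w ≤ pairFlow C tun pair w u / D i u :=
          (Finset.fold_min_le _).2 (Or.inr ⟨u, hmemz, le_rfl⟩)
        calc gamma C tun w * fMCONC C tun pair (D i) w
            ≤ gamma C tun w * (pairFlow C tun pair w u / D i u) :=
              mul_le_mul_of_nonneg_left e1 hw.le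
          _ = (∑ p, if pair p = u then w p else 0) / D i u := by
              rw [pairFlow]; field_simp
      have b1 := hbound x hγx
      have b2 := hbound x' hγx'
      have hnum : lam * γx * fMCONC C tun pair (D i) x
          + (1 - lam) * γx' * fMCONC C tun pair (D i) x'
          ≤ (∑ p, if pair p = u then z p else 0) / D i u := by
        have c1 : lam * (γx * fMCONC C tun pair (D i) x)
            ≤ lam * ((∑ p, if pair p = u then x p else 0) / D i u) :=
          mul_le_mul_of_nonneg_left b1 hlam0
        have c2 : (1 - lam) * (γx' * fMCONC C tun pair (D i) x')
            ≤ (1 - lam) * ((∑ p, if pair p = u then x' p else 0) / D i u) :=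
          mul_le_mul_of_nonneg_left b2 h1'
        rw [hsz, add_div, mul_div_assoc, mul_div_assoc]
        calc lam * γx * fMCONC C tun pair (D i) x
            + (1 - lam) * γx' * fMCONC C tun pair (D i) x'
            = lam * (γx * fMCONC C tun pair (D i) x)
              + (1 - lam) * (γx' * fMCONC C tun pair (D i) x') := by ring
          _ ≤ _ := add_le_add c1 c2
      calc (lam * γx * fMCONC C tun pair (D i) x
            + (1 - lam) * γx' * fMCONC C tun pair (D i) x') / Γ
          ≤ ((∑ p, if pair p = u then z p else 0) / D i u) / Γ :=
            div_le_div_of_nonneg_right ?_ hΓpos.le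
        _ ≤ ((∑ p, if pair p = u then z p else 0) / D i u) / γz := by
            apply div_le_div_of_nonneg_left (div_nonneg hsz0 hDu.le) hγz hγzΓ
        _ = pairFlow C tun pair z u / D i u := by
            rw [pairFlow, ← hγzdef, div_div, div_div, mul_comm]
      exact hnum
  have hsum : (lam * γx * (∑ i, fMCONC C tun pair (D i) x)
      + (1 - lam) * γx' * (∑ i, fMCONC C tun pair (D i) x')) / Γ
      ≤ ∑ i, fMCONC C tun pair (D i) z := by
    calc (lam * γx * (∑ i, fMCONC C tun pair (D i) x)
          + (1 - lam) * γx' * (∑ i, fMCONC C tun pair (D i) x')) / Γ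
        = ∑ i, (lam * γx * fMCONC C tun pair (D i) x
            + (1 - lam) * γx' * fMCONC C tun pair (D i) x') / Γ := by
          rw [← Finset.sum_div, Finset.sum_add_distrib, ← Finset.mul_sum, ← Finset.mul_sum]
      _ ≤ _ := Finset.sum_le_sum fun i _ => key i
  set A := ∑ i, fMCONC C tun pair (D i) x with hA
  set B := ∑ i, fMCONC C tun pair (D i) x' with hB
  have hmin : min A B ≤ (lam * γx * A + (1 - lam) * γx' * B) / Γ := by
    rw [le_div_iff₀ hΓpos]
    have c1 : lam * γx * min A B ≤ lam * γx * A :=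
      mul_le_mul_of_nonneg_left (min_le_left A B) (mul_nonneg hlam0 hγx.le)
    have c2 : (1 - lam) * γx' * min A B ≤ (1 - lam) * γx' * B :=
      mul_le_mul_of_nonneg_left (min_le_right A B) (mul_nonneg h1' hγx'.le)
    calc min A B * Γ = lam * γx * min A B + (1 - lam) * γx' * min A B := by
          rw [hΓdef]; ring
      _ ≤ _ := add_le_add c1 c2
  have total : min A B ≤ ∑ i, fMCONC C tun pair (D i) z := hmin.trans hsum
  have hMinv : (0:ℝ) ≤ (M:ℝ)⁻¹ := inv_nonneg.2 (Nat.cast_nonneg M)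
  calc min ((M : ℝ)⁻¹ * A) ((M : ℝ)⁻¹ * B) = (M:ℝ)⁻¹ * min A B := by
        rw [mul_min_of_nonneg _ _ hMinv]
    _ ≤ _ := mul_le_mul_of_nonneg_left total hMinv
end
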